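/- arXiv:0910.2768 — 4 statements merged into one kernel-verified Lean document; each statement's English description precedes it below -/
import Mathlib

section
/- The integral ∫₀¹ (1/√(t(1-t²)) - 2√(t/(1-t²))) dt is strictly positive; equivalently, ∫₀¹ dt/√(t(1-t²)) > 2·∫₀¹ √(t/(1-t²)) dt. -/
open Real MeasureTheory

noncomputable def pfn (t : ℝ) : ℝ := (1 - 2*t) / Real.sqrt (t * (1 - t^2))

lemma den_pos {t : ℝ} (ht : t ∈ Set.Ioo (0:ℝ) 1) : 0 < t * (1 - t^2) := by
  have h1 : 0 < 1 - t^2 := by nlinarith [ht.1, ht.2]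
  exact mul_pos ht.1 h1

lemma sqrt_den_pos {t : ℝ} (ht : t ∈ Set.Ioo (0:ℝ) 1) :
    0 < Real.sqrt (t * (1 - t^2)) := Real.sqrt_pos.2 (den_pos ht)

lemma sqrt_ratio_eq {t : ℝ} (ht : t ∈ Set.Ioo (0:ℝ) 1) :
    Real.sqrt (t / (1 - t^2)) = t / Real.sqrt (t * (1 - t^2)) := by
  have h2 : (0:ℝ) < 1 - t^2 := by nlinarith [ht.1, ht.2]
  have hts : Real.sqrt t * Real.sqrt t = t := Real.mul_self_sqrt ht.1.le
  rw [Real.sqrt_div ht.1.le, Real.sqrt_mul ht.1.le,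
    div_eq_div_iff (Real.sqrt_pos.2 h2).ne'
      (mul_ne_zero (Real.sqrt_pos.2 ht.1).ne' (Real.sqrt_pos.2 h2).ne')]
  linear_combination Real.sqrt (1 - t^2) * hts

/-- Integrability of the dominating function √2 (1/√t + 1/√(1-t)) on (0,1). -/
lemma integrableOn_dom :
    IntegrableOn (fun t : ℝ => Real.sqrt 2 * (1 / Real.sqrt t + 1 / Real.sqrt (1 - t)))
      (Set.Ioo 0 1) := by
  have h1 : IntervalIntegrable (fun x : ℝ => x ^ (-(1/2) : ℝ)) volume 0 1 :=
    intervalIntegral.intervalIntegrable_rpow' (by norm_num)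
  have h2 : IntervalIntegrable (fun x : ℝ => (1 - x) ^ (-(1/2) : ℝ)) volume 0 1 := by
    have h := (h1.comp_sub_left 1).symm
    simpa only [sub_zero, sub_self] using h
  have h3 : IntervalIntegrable
      (fun x : ℝ => Real.sqrt 2 * (x ^ (-(1/2) : ℝ) + (1 - x) ^ (-(1/2) : ℝ))) volume 0 1 :=
    (h1.add h2).const_mul _
  have h4 : IntegrableOn
      (fun x : ℝ => Real.sqrt 2 * (x ^ (-(1/2) : ℝ) + (1 - x) ^ (-(1/2) : ℝ))) (Set.Ioo 0 1) :=
    ((intervalIntegrable_iff_integrableOn_Ioc_of_le (by norm_num)).1 h3).mono_set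
      Set.Ioo_subset_Ioc_self
  apply h4.congr_fun _ measurableSet_Ioo
  intro t ht
  have ht0 : (0:ℝ) ≤ t := le_of_lt ht.1
  have ht1 : (0:ℝ) ≤ 1 - t := by linarith [ht.2]
  have e1 : t ^ (-(1/2) : ℝ) = 1 / Real.sqrt t := by
    rw [Real.rpow_neg ht0, Real.sqrt_eq_rpow]
    exact (one_div _).symm
  have e2 : (1 - t) ^ (-(1/2) : ℝ) = 1 / Real.sqrt (1 - t) := by
    rw [Real.rpow_neg ht1, Real.sqrt_eq_rpow]
    exact (one_div _).symm
  simp only [e1, e2]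

/-- The main dominating bound. -/
lemma dom_bound {t : ℝ} (ht : t ∈ Set.Ioo (0:ℝ) 1) :
    1 / Real.sqrt (t * (1 - t^2)) ≤
      Real.sqrt 2 * (1 / Real.sqrt t + 1 / Real.sqrt (1 - t)) := by
  have ht0 := ht.1
  have ht1 := ht.2
  have hs2 : (0:ℝ) < Real.sqrt 2 := Real.sqrt_pos.2 (by norm_num)
  have hst : 0 < Real.sqrt (t * (1 - t^2)) := sqrt_den_pos ht
  rcases le_or_gt t (1/2) with h | h
  · -- t(1-t²) ≥ t/2
    have hb : t / 2 ≤ t * (1 - t^2) := by nlinarith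
    have : Real.sqrt (t / 2) ≤ Real.sqrt (t * (1 - t^2)) := Real.sqrt_le_sqrt hb
    have hs : Real.sqrt (t / 2) = Real.sqrt t / Real.sqrt 2 := Real.sqrt_div (le_of_lt ht0) 2
    have hsp : 0 < Real.sqrt (t / 2) := by
      rw [hs]; positivity
    have h1 : 1 / Real.sqrt (t * (1 - t^2)) ≤ 1 / Real.sqrt (t / 2) :=
      one_div_le_one_div_of_le hsp this
    have h2 : 1 / Real.sqrt (t / 2) = Real.sqrt 2 * (1 / Real.sqrt t) := by
      rw [hs]; field_simp
    have h3 : 0 ≤ Real.sqrt 2 * (1 / Real.sqrt (1 - t)) := by positivity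
    calc 1 / Real.sqrt (t * (1 - t^2)) ≤ 1 / Real.sqrt (t / 2) := h1
      _ = Real.sqrt 2 * (1 / Real.sqrt t) := h2
      _ ≤ Real.sqrt 2 * (1 / Real.sqrt t) + Real.sqrt 2 * (1 / Real.sqrt (1 - t)) := by
          linarith
      _ = Real.sqrt 2 * (1 / Real.sqrt t + 1 / Real.sqrt (1 - t)) := by ring
  · -- t(1-t²) ≥ (1-t)/2
    have hb : (1 - t) / 2 ≤ t * (1 - t^2) := by nlinarith
    have hle : Real.sqrt ((1 - t) / 2) ≤ Real.sqrt (t * (1 - t^2)) := Real.sqrt_le_sqrt hb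
    have hs : Real.sqrt ((1 - t) / 2) = Real.sqrt (1 - t) / Real.sqrt 2 :=
      Real.sqrt_div (by linarith : (0:ℝ) ≤ 1 - t) 2
    have hsp : 0 < Real.sqrt ((1 - t) / 2) := by
      rw [hs]
      have : 0 < Real.sqrt (1 - t) := Real.sqrt_pos.2 (by linarith)
      positivity
    have h1 : 1 / Real.sqrt (t * (1 - t^2)) ≤ 1 / Real.sqrt ((1 - t) / 2) :=
      one_div_le_one_div_of_le hsp hle
    have h2 : 1 / Real.sqrt ((1 - t) / 2) = Real.sqrt 2 * (1 / Real.sqrt (1 - t)) := by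
      rw [hs]; field_simp
    have h3 : 0 ≤ Real.sqrt 2 * (1 / Real.sqrt t) := by positivity
    calc 1 / Real.sqrt (t * (1 - t^2)) ≤ 1 / Real.sqrt ((1 - t) / 2) := h1
      _ = Real.sqrt 2 * (1 / Real.sqrt (1 - t)) := h2
      _ ≤ Real.sqrt 2 * (1 / Real.sqrt t) + Real.sqrt 2 * (1 / Real.sqrt (1 - t)) := by
          linarith
      _ = Real.sqrt 2 * (1 / Real.sqrt t + 1 / Real.sqrt (1 - t)) := by ring

lemma integrableOn_h1 :
    IntegrableOn (fun t : ℝ => 1 / Real.sqrt (t * (1 - t^2))) (Set.Ioo 0 1) := by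
  apply Integrable.mono' integrableOn_dom
  · apply Measurable.aestronglyMeasurable
    fun_prop
  · filter_upwards [ae_restrict_mem measurableSet_Ioo] with t ht
    have h0 : 0 ≤ 1 / Real.sqrt (t * (1 - t^2)) := by positivity
    rw [Real.norm_eq_abs, abs_of_nonneg h0]
    exact dom_bound ht

lemma integrableOn_pfn : IntegrableOn pfn (Set.Ioo 0 1) := by
  apply Integrable.mono' integrableOn_h1
  · apply Measurable.aestronglyMeasurable
    unfold pfn
    fun_prop
  · filter_upwards [ae_restrict_mem measurableSet_Ioo] with t ht
    have hst := sqrt_den_pos ht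
    rw [Real.norm_eq_abs, pfn, abs_div, abs_of_nonneg hst.le, div_le_div_iff₀ hst hst,
      one_mul]
    have : |1 - 2*t| ≤ 1 := by
      rw [abs_le]; constructor <;> [linarith [ht.2]; linarith [ht.1]]
    nlinarith [hst]

lemma integrableOn_h2 :
    IntegrableOn (fun t : ℝ => Real.sqrt (t / (1 - t^2))) (Set.Ioo 0 1) := by
  apply Integrable.mono' integrableOn_h1
  · apply Measurable.aestronglyMeasurable
    fun_prop
  · filter_upwards [ae_restrict_mem measurableSet_Ioo] with t ht
    have hst := sqrt_den_pos ht
    have h2 : 1 - t^2 > 0 := by nlinarith [ht.1, ht.2]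
    rw [Real.norm_eq_abs, abs_of_nonneg (Real.sqrt_nonneg _)]
    rw [sqrt_ratio_eq ht, div_le_div_iff₀ hst hst, one_mul]
    nlinarith [hst, ht.2]

/-- pointwise identity on (0,1). -/
lemma integrand_eq {t : ℝ} (ht : t ∈ Set.Ioo (0:ℝ) 1) :
    1 / Real.sqrt (t * (1 - t^2)) - 2 * Real.sqrt (t / (1 - t^2)) = pfn t := by
  have hst := sqrt_den_pos ht
  have h2 : 1 - t^2 > 0 := by nlinarith [ht.1, ht.2]
  rw [sqrt_ratio_eq ht, pfn]
  field_simp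

lemma pfn_intervalIntegrable : IntervalIntegrable pfn volume 0 1 := by
  rw [intervalIntegrable_iff_integrableOn_Ioo_of_le (by norm_num)]
  exact integrableOn_pfn

/-- positivity of the core integral -/
lemma pfn_integral_pos : 0 < ∫ t in Set.Ioo (0:ℝ) 1, pfn t := by
  have hIoo : (∫ t in Set.Ioo (0:ℝ) 1, pfn t) = ∫ t in (0:ℝ)..1, pfn t := by
    rw [intervalIntegral.integral_of_le (by norm_num), integral_Ioc_eq_integral_Ioo]
  rw [hIoo]
  have hi01 := pfn_intervalIntegrable
  have hiA : IntervalIntegrable pfn volume 0 (1/2) := by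
    apply hi01.mono_set
    rw [Set.uIcc_of_le (by norm_num : (0:ℝ) ≤ 1/2), Set.uIcc_of_le (by norm_num : (0:ℝ) ≤ 1)]
    exact Set.Icc_subset_Icc le_rfl (by norm_num)
  have hiB : IntervalIntegrable pfn volume (1/2) 1 := by
    apply hi01.mono_set
    rw [Set.uIcc_of_le (by norm_num : (1/2:ℝ) ≤ 1), Set.uIcc_of_le (by norm_num : (0:ℝ) ≤ 1)]
    exact Set.Icc_subset_Icc (by norm_num) le_rfl
  have hsplit : (∫ t in (0:ℝ)..1, pfn t)
      = (∫ t in (0:ℝ)..(1/2), pfn t) + ∫ t in (1/2:ℝ)..1, pfn t :=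
    (intervalIntegral.integral_add_adjacent_intervals hiA hiB).symm
  -- substitution t ↦ 1 - t on the second piece
  have hsub : (∫ t in (1/2:ℝ)..1, pfn t) = ∫ x in (0:ℝ)..(1/2), pfn (1 - x) := by
    rw [intervalIntegral.integral_comp_sub_left pfn 1]
    norm_num
  have hiB' : IntervalIntegrable (fun x => pfn (1 - x)) volume 0 (1/2) := by
    have := (hiB.comp_sub_left 1).symm
    norm_num at this
    exact this
  have hsum : (∫ t in (0:ℝ)..1, pfn t)
      = ∫ x in (0:ℝ)..(1/2), (pfn x + pfn (1 - x)) := by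
    rw [hsplit, hsub, intervalIntegral.integral_add hiA hiB']
  rw [hsum]
  apply intervalIntegral.intervalIntegral_pos_of_pos_on (hiA.add hiB')
  · intro x hx
    have hx0 := hx.1
    have hx2 : x < 1/2 := hx.2
    have hd1 : 0 < x * (1 - x^2) := den_pos ⟨hx0, by linarith⟩
    have hd2 : 0 < (1-x) * (1 - (1-x)^2) := by nlinarith
    have hs1 : 0 < Real.sqrt (x * (1 - x^2)) := Real.sqrt_pos.2 hd1
    have hs2 : 0 < Real.sqrt ((1-x) * (1 - (1-x)^2)) := Real.sqrt_pos.2 hd2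
    have hlt : Real.sqrt (x * (1 - x^2)) < Real.sqrt ((1-x) * (1 - (1-x)^2)) := by
      apply Real.sqrt_lt_sqrt hd1.le
      nlinarith
    have hnum : 0 < 1 - 2*x := by linarith
    unfold pfn
    have e : 1 - 2*(1-x) = -(1 - 2*x) := by ring
    rw [e, neg_div]
    have : (1 - 2*x) / Real.sqrt ((1-x) * (1 - (1-x)^2))
        < (1 - 2*x) / Real.sqrt (x * (1 - x^2)) :=
      div_lt_div_of_pos_left hnum hs1 hlt
    linarith
  · norm_num

theorem stmt2 :
    (0 < ∫ t in Set.Ioo (0:ℝ) 1,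
        (1 / Real.sqrt (t * (1 - t^2)) - 2 * Real.sqrt (t / (1 - t^2)))) ∧
    (∫ t in Set.Ioo (0:ℝ) 1, 1 / Real.sqrt (t * (1 - t^2))) >
      2 * ∫ t in Set.Ioo (0:ℝ) 1, Real.sqrt (t / (1 - t^2)) := by
  have hcongr : (∫ t in Set.Ioo (0:ℝ) 1,
      (1 / Real.sqrt (t * (1 - t^2)) - 2 * Real.sqrt (t / (1 - t^2))))
      = ∫ t in Set.Ioo (0:ℝ) 1, pfn t := by
    apply setIntegral_congr_fun measurableSet_Ioo
    intro t ht
    exact integrand_eq ht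
  have h1 := integrableOn_h1
  have h2 := integrableOn_h2
  have h2' : IntegrableOn (fun t : ℝ => 2 * Real.sqrt (t / (1 - t^2))) (Set.Ioo 0 1) :=
    h2.const_mul 2
  have hsub : (∫ t in Set.Ioo (0:ℝ) 1,
      (1 / Real.sqrt (t * (1 - t^2)) - 2 * Real.sqrt (t / (1 - t^2))))
      = (∫ t in Set.Ioo (0:ℝ) 1, 1 / Real.sqrt (t * (1 - t^2)))
        - ∫ t in Set.Ioo (0:ℝ) 1, 2 * Real.sqrt (t / (1 - t^2)) :=
    integral_sub h1 h2'
  have hmul : (∫ t in Set.Ioo (0:ℝ) 1, 2 * Real.sqrt (t / (1 - t^2)))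
      = 2 * ∫ t in Set.Ioo (0:ℝ) 1, Real.sqrt (t / (1 - t^2)) :=
    integral_const_mul 2 _
  have hpos : 0 < ∫ t in Set.Ioo (0:ℝ) 1,
      (1 / Real.sqrt (t * (1 - t^2)) - 2 * Real.sqrt (t / (1 - t^2))) := by
    rw [hcongr]; exact pfn_integral_pos
  refine ⟨hpos, ?_⟩
  rw [hsub, hmul] at hpos
  linarith
end

section
/- For every integer k ≥ 2, the number c_k := √(B_k/(2 A_k)), where A_k = ∫₀¹ (t/(1-t²))^{1/(k+1)} dt and B_k = ∫₀¹ (t(1-t²)^k)^{-1/(k+1)} dt, satisfies c_k > (1/√2) · k^{1/(2(k+1))} · (k/(k-1))^{(k-1)/(2(k+1))}. -/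
open Real MeasureTheory

lemma intOn_rpow {p : ℝ} (hp : -1 < p) {a b : ℝ} (hab : a ≤ b) :
    IntegrableOn (fun t : ℝ => t ^ p) (Set.Ioo a b) := by
  have h := intervalIntegral.intervalIntegrable_rpow' (a := a) (b := b) hp
  rwa [intervalIntegrable_iff_integrableOn_Ioo_of_le hab] at h

lemma intOn_one_sub_rpow {p : ℝ} (hp : -1 < p) :
    IntegrableOn (fun t : ℝ => (1 - t) ^ p) (Set.Ioo (0:ℝ) 1) := by
  have h := (intervalIntegral.intervalIntegrable_rpow' (a := (0:ℝ)) (b := 1) hp).comp_sub_left 1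
  norm_num at h
  replace h := h.symm
  rwa [intervalIntegrable_iff_integrableOn_Ioo_of_le (by norm_num)] at h

-- key AM-GM: for 0 ≤ x ≤ 1, (k*x) * (k*(1-x))^(k-1) ≤ (k-1)^(k-1)
lemma key_amgm (k : ℕ) (hk : 2 ≤ k) {x : ℝ} (hx0 : 0 ≤ x) (hx1 : x ≤ 1) :
    ((k:ℝ)*x) * ((k:ℝ)*(1-x))^(k-1) ≤ ((k:ℝ)-1)^(k-1) := by
  have hk1 : (1:ℝ) ≤ (k:ℝ) - 1 := by
    have : (2:ℝ) ≤ k := by exact_mod_cast hk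
    linarith
  have hkpos : (0:ℝ) < k := by positivity
  have hk1pos : (0:ℝ) < (k:ℝ) - 1 := by linarith
  set p₁ : ℝ := (k:ℝ) * x with hp₁
  set p₂ : ℝ := (k:ℝ) * (1-x) / ((k:ℝ)-1) with hp₂
  have hp₁0 : 0 ≤ p₁ := by positivity
  have hp₂0 : 0 ≤ p₂ := by
    exact div_nonneg (mul_nonneg hkpos.le (by linarith)) hk1pos.le
  have hw : (1:ℝ)/k + ((k:ℝ)-1)/k = 1 := by field_simp; ring
  have hgm := Real.geom_mean_le_arith_mean2_weighted (by positivity)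
    (div_nonneg (by linarith) hkpos.le) hp₁0 hp₂0 hw
  have harith : (1:ℝ)/k * p₁ + ((k:ℝ)-1)/k * p₂ = 1 := by
    rw [hp₁, hp₂]; field_simp; ring
  rw [harith] at hgm
  have hbase : 0 ≤ p₁ ^ ((1:ℝ)/k) * p₂ ^ (((k:ℝ)-1)/k) := by positivity
  have hpow := pow_le_pow_left₀ hbase hgm k
  rw [one_pow, mul_pow] at hpow
  rw [← Real.rpow_natCast (p₁ ^ ((1:ℝ)/k)) k, ← Real.rpow_natCast (p₂ ^ (((k:ℝ)-1)/k)) k,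
    ← Real.rpow_mul hp₁0, ← Real.rpow_mul hp₂0] at hpow
  have e1 : (1:ℝ)/k * k = 1 := by field_simp
  have e2 : ((k:ℝ)-1)/k * k = ((k-1 : ℕ) : ℝ) := by
    push_cast [Nat.cast_sub (by omega : 1 ≤ k)]
    field_simp
  rw [e1, e2, Real.rpow_one, Real.rpow_natCast] at hpow
  have hp2pow : p₂ ^ (k-1) = ((k:ℝ)*(1-x))^(k-1) / ((k:ℝ)-1)^(k-1) := by
    rw [hp₂, div_pow]
  rw [hp2pow] at hpow
  calc ((k:ℝ)*x) * ((k:ℝ)*(1-x))^(k-1)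
      = (p₁ * (((k:ℝ)*(1-x))^(k-1) / ((k:ℝ)-1)^(k-1))) * ((k:ℝ)-1)^(k-1) := by
        field_simp; ring
    _ ≤ 1 * ((k:ℝ)-1)^(k-1) := by
        apply mul_le_mul_of_nonneg_right hpow (by positivity)
    _ = ((k:ℝ)-1)^(k-1) := one_mul _

lemma key_amgm_strict (k : ℕ) (hk : 2 ≤ k) {x : ℝ} (hx0 : 0 < x) (hx1 : x ≤ 1)
    (hx : (k:ℝ)*x ≤ 1/8) :
    ((k:ℝ)*x) * ((k:ℝ)*(1-x))^(k-1) < ((k:ℝ)-1)^(k-1) := by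
  have hk2 : (2:ℝ) ≤ (k:ℝ) := by exact_mod_cast hk
  have hk1pos : (0:ℝ) < (k:ℝ) - 1 := by linarith
  have hkm : ((k-1 : ℕ) : ℝ) = (k:ℝ) - 1 := by
    push_cast [Nat.cast_sub (by omega : 1 ≤ k)]; try ring
  have hb : (k:ℝ)*(1-x) ≤ Real.exp (1/((k:ℝ)-1)) * ((k:ℝ)-1) := by
    have h1 : (k:ℝ)*(1-x) ≤ (k:ℝ) := by nlinarith
    have h2 : (k:ℝ) = (1 + 1/((k:ℝ)-1)) * ((k:ℝ)-1) := by field_simp; ring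
    have h3 : 1 + 1/((k:ℝ)-1) ≤ Real.exp (1/((k:ℝ)-1)) := by
      have := Real.add_one_le_exp (1/((k:ℝ)-1)); linarith
    calc (k:ℝ)*(1-x) ≤ (k:ℝ) := h1
      _ = (1 + 1/((k:ℝ)-1)) * ((k:ℝ)-1) := h2
      _ ≤ Real.exp (1/((k:ℝ)-1)) * ((k:ℝ)-1) := by
          apply mul_le_mul_of_nonneg_right h3 hk1pos.le
  have hbpow : ((k:ℝ)*(1-x))^(k-1) ≤ Real.exp 1 * ((k:ℝ)-1)^(k-1) := by
    have h5 : ((k-1:ℕ):ℝ) * (1/((k:ℝ)-1)) = 1 := by rw [hkm]; field_simp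
    calc ((k:ℝ)*(1-x))^(k-1)
        ≤ (Real.exp (1/((k:ℝ)-1)) * ((k:ℝ)-1))^(k-1) :=
          pow_le_pow_left₀ (by nlinarith : (0:ℝ) ≤ (k:ℝ)*(1-x)) hb (k-1)
      _ = Real.exp 1 * ((k:ℝ)-1)^(k-1) := by
          rw [mul_pow, ← Real.exp_nat_mul, h5]
  have hkx : 0 < (k:ℝ)*x := by positivity
  have he : Real.exp 1 < 3 := by
    have := Real.exp_one_lt_d9; linarith
  calc ((k:ℝ)*x) * ((k:ℝ)*(1-x))^(k-1)
      ≤ ((k:ℝ)*x) * (Real.exp 1 * ((k:ℝ)-1)^(k-1)) := by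
        apply mul_le_mul_of_nonneg_left hbpow hkx.le
    _ ≤ (1/8) * (Real.exp 1 * ((k:ℝ)-1)^(k-1)) := by
        apply mul_le_mul_of_nonneg_right hx (by positivity)
    _ < ((k:ℝ)-1)^(k-1) := by
        have hpos : (0:ℝ) < ((k:ℝ)-1)^(k-1) := by positivity
        nlinarith [Real.exp_pos 1]

noncomputable def Rk (k : ℕ) : ℝ := ((k:ℝ)^k / ((k:ℝ)-1)^(k-1)) ^ ((1:ℝ)/((k:ℝ)+1))

lemma cmp_le (k : ℕ) (hk : 2 ≤ k) {t : ℝ} (ht0 : 0 < t) (ht1 : t < 1)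
    (hkey : ((k:ℝ)*t^2) * ((k:ℝ)*(1-t^2))^(k-1) ≤ ((k:ℝ)-1)^(k-1)) :
    ((k:ℝ)^k / ((k:ℝ)-1)^(k-1)) * (t/(1-t^2)) ≤ (t*(1-t^2)^k)⁻¹ := by
  have hk2 : (2:ℝ) ≤ (k:ℝ) := by exact_mod_cast hk
  have hu : 0 < 1 - t^2 := by nlinarith
  have hk1pos : (0:ℝ) < (k:ℝ) - 1 := by linarith
  have hkk : k - 1 + 1 = k := by omega
  have hxk : ∀ x:ℝ, x^k = x^(k-1)*x := fun x => by rw [← pow_succ, hkk]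
  have hks : ((k:ℝ)*t^2) * ((k:ℝ)*(1-t^2))^(k-1) = (k:ℝ)^k * t^2 * (1-t^2)^(k-1) := by
    rw [mul_pow, hxk]
    ring
  rw [hks] at hkey
  have h1 : 0 < t*(1-t^2)^k := by positivity
  rw [inv_eq_one_div, le_div_iff₀ h1]
  rw [hxk (1-t^2)]
  have heq : ((k:ℝ)^k / ((k:ℝ)-1)^(k-1)) * (t/(1-t^2)) * (t*((1-t^2)^(k-1)*(1-t^2)))
      = ((k:ℝ)^k * t^2 * (1-t^2)^(k-1)) / ((k:ℝ)-1)^(k-1) := by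
    field_simp
  rw [heq, div_le_one (by positivity)]
  exact hkey

lemma cmp_lt (k : ℕ) (hk : 2 ≤ k) {t : ℝ} (ht0 : 0 < t) (ht1 : t < 1)
    (hkey : ((k:ℝ)*t^2) * ((k:ℝ)*(1-t^2))^(k-1) < ((k:ℝ)-1)^(k-1)) :
    ((k:ℝ)^k / ((k:ℝ)-1)^(k-1)) * (t/(1-t^2)) < (t*(1-t^2)^k)⁻¹ := by
  have hk2 : (2:ℝ) ≤ (k:ℝ) := by exact_mod_cast hk
  have hu : 0 < 1 - t^2 := by nlinarith
  have hk1pos : (0:ℝ) < (k:ℝ) - 1 := by linarith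
  have hkk : k - 1 + 1 = k := by omega
  have hxk : ∀ x:ℝ, x^k = x^(k-1)*x := fun x => by rw [← pow_succ, hkk]
  have hks : ((k:ℝ)*t^2) * ((k:ℝ)*(1-t^2))^(k-1) = (k:ℝ)^k * t^2 * (1-t^2)^(k-1) := by
    rw [mul_pow, hxk]
    ring
  rw [hks] at hkey
  have h1 : 0 < t*(1-t^2)^k := by positivity
  rw [inv_eq_one_div, lt_div_iff₀ h1]
  rw [hxk (1-t^2)]
  have heq : ((k:ℝ)^k / ((k:ℝ)-1)^(k-1)) * (t/(1-t^2)) * (t*((1-t^2)^(k-1)*(1-t^2)))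
      = ((k:ℝ)^k * t^2 * (1-t^2)^(k-1)) / ((k:ℝ)-1)^(k-1) := by
    field_simp
  rw [heq, div_lt_one (by positivity)]
  exact hkey

lemma pow_eval_f (k : ℕ) (hk : 2 ≤ k) {t : ℝ} (ht0 : 0 < t) (ht1 : t < 1) :
    (Rk k * (t/(1-t^2)) ^ ((1:ℝ)/((k:ℝ)+1)))^(k+1)
      = ((k:ℝ)^k / ((k:ℝ)-1)^(k-1)) * (t/(1-t^2)) := by
  have hk2 : (2:ℝ) ≤ (k:ℝ) := by exact_mod_cast hk
  have hu : 0 < 1 - t^2 := by nlinarith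
  have hD : (0:ℝ) ≤ (k:ℝ)^k / ((k:ℝ)-1)^(k-1) :=
    div_nonneg (by positivity) (pow_nonneg (by linarith) _)
  have hf0 : (0:ℝ) ≤ t/(1-t^2) := by positivity
  have hexp : (1:ℝ)/((k:ℝ)+1) * ((k+1:ℕ):ℝ) = 1 := by
    push_cast; field_simp
  rw [mul_pow, Rk, ← Real.rpow_natCast (_ ^ _) (k+1), ← Real.rpow_mul hD,
    ← Real.rpow_natCast ((t/(1-t^2)) ^ _) (k+1), ← Real.rpow_mul hf0, hexp,
    Real.rpow_one, Real.rpow_one]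

lemma pow_eval_g (k : ℕ) (hk : 2 ≤ k) {t : ℝ} (ht0 : 0 < t) (ht1 : t < 1) :
    ((t*(1-t^2)^k) ^ (-(1:ℝ)/((k:ℝ)+1)))^(k+1) = (t*(1-t^2)^k)⁻¹ := by
  have hk2 : (2:ℝ) ≤ (k:ℝ) := by exact_mod_cast hk
  have hu : 0 < 1 - t^2 := by nlinarith
  have hg0 : (0:ℝ) ≤ t*(1-t^2)^k := by positivity
  have hexp : -(1:ℝ)/((k:ℝ)+1) * ((k+1:ℕ):ℝ) = -1 := by
    push_cast; field_simp
  rw [← Real.rpow_natCast ((t*(1-t^2)^k) ^ _) (k+1), ← Real.rpow_mul hg0, hexp,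
    Real.rpow_neg_one]

lemma ratio_le (k : ℕ) (hk : 2 ≤ k) {t : ℝ} (ht0 : 0 < t) (ht1 : t < 1) :
    Rk k * (t/(1-t^2)) ^ ((1:ℝ)/((k:ℝ)+1)) ≤ (t*(1-t^2)^k) ^ (-(1:ℝ)/((k:ℝ)+1)) := by
  have hk2 : (2:ℝ) ≤ (k:ℝ) := by exact_mod_cast hk
  have hu : 0 < 1 - t^2 := by nlinarith
  have hL : (0:ℝ) ≤ Rk k * (t/(1-t^2)) ^ ((1:ℝ)/((k:ℝ)+1)) :=
    mul_nonneg (Real.rpow_nonneg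
      (div_nonneg (by positivity) (pow_nonneg (by linarith) _)) _)
      (Real.rpow_nonneg (by positivity) _)
  have hR : (0:ℝ) ≤ (t*(1-t^2)^k) ^ (-(1:ℝ)/((k:ℝ)+1)) := Real.rpow_nonneg (by positivity) _
  rw [← pow_le_pow_iff_left₀ hL hR (Nat.succ_ne_zero k), pow_eval_f k hk ht0 ht1,
    pow_eval_g k hk ht0 ht1]
  exact cmp_le k hk ht0 ht1 (key_amgm k hk (by positivity) (by nlinarith))

lemma ratio_lt (k : ℕ) (hk : 2 ≤ k) {t : ℝ} (ht0 : 0 < t) (ht1 : t < 1)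
    (ht2 : t < 1/(2*(k:ℝ))) :
    Rk k * (t/(1-t^2)) ^ ((1:ℝ)/((k:ℝ)+1)) < (t*(1-t^2)^k) ^ (-(1:ℝ)/((k:ℝ)+1)) := by
  have hk2 : (2:ℝ) ≤ (k:ℝ) := by exact_mod_cast hk
  have hu : 0 < 1 - t^2 := by nlinarith
  have hL : (0:ℝ) ≤ Rk k * (t/(1-t^2)) ^ ((1:ℝ)/((k:ℝ)+1)) :=
    mul_nonneg (Real.rpow_nonneg
      (div_nonneg (by positivity) (pow_nonneg (by linarith) _)) _)
      (Real.rpow_nonneg (by positivity) _)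
  have hR : (0:ℝ) ≤ (t*(1-t^2)^k) ^ (-(1:ℝ)/((k:ℝ)+1)) := Real.rpow_nonneg (by positivity) _
  rw [← pow_lt_pow_iff_left₀ hL hR (Nat.succ_ne_zero k), pow_eval_f k hk ht0 ht1,
    pow_eval_g k hk ht0 ht1]
  have hsmall : (k:ℝ) * t^2 ≤ 1/8 := by
    have h1 : t ≤ 1/(2*(k:ℝ)) := ht2.le
    have h2 : (k:ℝ) * t^2 ≤ (k:ℝ) * (1/(2*(k:ℝ)))^2 := by
      apply mul_le_mul_of_nonneg_left _ (by positivity)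
      apply pow_le_pow_left₀ ht0.le h1
    have h3 : (k:ℝ) * (1/(2*(k:ℝ)))^2 = 1/(4*(k:ℝ)) := by field_simp; ring
    have h4 : 1/(4*(k:ℝ)) ≤ 1/8 := by
      apply one_div_le_one_div_of_le (by norm_num) (by linarith)
    linarith
  exact cmp_lt k hk ht0 ht1 (key_amgm_strict k hk (by positivity) (by nlinarith) hsmall)

lemma meas_f (k : ℕ) : Measurable (fun t : ℝ => (t/(1-t^2)) ^ ((1:ℝ)/((k:ℝ)+1))) := by
  fun_prop

lemma meas_g (k : ℕ) : Measurable (fun t : ℝ => (t*(1-t^2)^k) ^ (-(1:ℝ)/((k:ℝ)+1))) := by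
  fun_prop

lemma intf (k : ℕ) (hk : 2 ≤ k) :
    IntegrableOn (fun t : ℝ => (t/(1-t^2)) ^ ((1:ℝ)/((k:ℝ)+1))) (Set.Ioo (0:ℝ) 1) := by
  have hk0 : (0:ℝ) < (k:ℝ)+1 := by positivity
  have hc1 : (-1:ℝ) < -((1:ℝ)/((k:ℝ)+1)) := by
    rw [neg_lt_neg_iff]
    rw [div_lt_one hk0]; norm_num; omega
  apply Integrable.mono' (intOn_one_sub_rpow hc1) ((meas_f k).aestronglyMeasurable)
  rw [ae_restrict_iff' measurableSet_Ioo]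
  filter_upwards with t ht
  obtain ⟨ht0, ht1⟩ := ht
  have hu : 0 < 1 - t^2 := by nlinarith
  have h1 : t/(1-t^2) ≤ 1/(1-t) := by
    rw [div_le_div_iff₀ hu (by linarith)]
    nlinarith
  rw [Real.norm_of_nonneg (Real.rpow_nonneg (by positivity) _)]
  calc (t/(1-t^2)) ^ ((1:ℝ)/((k:ℝ)+1))
      ≤ (1/(1-t)) ^ ((1:ℝ)/((k:ℝ)+1)) :=
        Real.rpow_le_rpow (by positivity) h1 (by positivity)
    _ = (1-t) ^ (-((1:ℝ)/((k:ℝ)+1))) := by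
        rw [Real.rpow_neg (by linarith), one_div, Real.inv_rpow (by linarith)]

lemma intg (k : ℕ) (hk : 2 ≤ k) :
    IntegrableOn (fun t : ℝ => (t*(1-t^2)^k) ^ (-(1:ℝ)/((k:ℝ)+1))) (Set.Ioo (0:ℝ) 1) := by
  have hk0 : (0:ℝ) < (k:ℝ)+1 := by positivity
  have hkR : (2:ℝ) ≤ (k:ℝ) := by exact_mod_cast hk
  set c : ℝ := (1:ℝ)/((k:ℝ)+1) with hc
  have hc0 : 0 < c := by positivity
  have hc1 : c < 1 := by rw [hc, div_lt_one hk0]; linarith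
  have hnc : -(1:ℝ)/((k:ℝ)+1) = -c := by rw [hc]; ring
  have hkc : (k:ℝ) * c = (k:ℝ)/((k:ℝ)+1) := by rw [hc]; ring
  have hkc1 : (k:ℝ)/((k:ℝ)+1) < 1 := by rw [div_lt_one hk0]; linarith
  have hsplit : Set.Ioo (0:ℝ) 1 = Set.Ioc (0:ℝ) (1/2) ∪ Set.Ioo (1/2 : ℝ) 1 :=
    (Set.Ioc_union_Ioo_eq_Ioo (by norm_num) (by norm_num)).symm
  rw [hsplit]
  apply IntegrableOn.union
  · -- on Ioc 0 (1/2), dominate by 2 * t ^ (-c)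
    have hint : IntegrableOn (fun t : ℝ => 2 * t ^ (-c)) (Set.Ioc (0:ℝ) (1/2)) := by
      apply Integrable.const_mul
      have h := intervalIntegral.intervalIntegrable_rpow' (a := (0:ℝ)) (b := 1/2)
        (by linarith : (-1:ℝ) < -c)
      rwa [intervalIntegrable_iff_integrableOn_Ioc_of_le (by norm_num)] at h
    apply Integrable.mono' hint ((meas_g k).aestronglyMeasurable)
    rw [ae_restrict_iff' measurableSet_Ioc]
    filter_upwards with t ht
    obtain ⟨ht0, ht1⟩ := ht
    have hu : (1:ℝ)/2 ≤ 1 - t^2 := by nlinarith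
    have hup : (0:ℝ) < 1 - t^2 := by linarith
    rw [Real.norm_of_nonneg (Real.rpow_nonneg (by positivity) _), hnc,
      Real.mul_rpow ht0.le (by positivity)]
    have h1 : ((1-t^2)^k) ^ (-c) ≤ (((1:ℝ)/2)^k) ^ (-c) := by
      apply Real.rpow_le_rpow_of_nonpos (by positivity)
        (pow_le_pow_left₀ (by norm_num) hu k) (by linarith)
    have h2 : (((1:ℝ)/2)^k) ^ (-c) ≤ 2 := by
      have e1 : (((1:ℝ)/2)^k) ^ (-c) = (2:ℝ) ^ ((k:ℝ)*c) := by
        rw [show ((1:ℝ)/2) = (2:ℝ)^(-1:ℝ) by norm_num [Real.rpow_neg_one],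
          ← Real.rpow_natCast ((2:ℝ)^(-1:ℝ)) k, ← Real.rpow_mul (by norm_num : (0:ℝ) ≤ 2),
          ← Real.rpow_mul (by norm_num : (0:ℝ) ≤ 2)]
        congr 1; ring
      rw [e1, hkc]
      calc (2:ℝ) ^ ((k:ℝ)/((k:ℝ)+1)) ≤ (2:ℝ) ^ (1:ℝ) :=
            Real.rpow_le_rpow_of_exponent_le one_le_two hkc1.le
        _ = 2 := Real.rpow_one 2
    calc t ^ (-c) * ((1-t^2)^k) ^ (-c)
        ≤ t ^ (-c) * 2 := by
          apply mul_le_mul_of_nonneg_left (h1.trans h2) (Real.rpow_nonneg ht0.le _)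
      _ = 2 * t ^ (-c) := mul_comm _ _
  · -- on Ioo (1/2) 1, dominate by 2 * (1-t) ^ (-(k/(k+1)))
    have hint : IntegrableOn (fun t : ℝ => 2 * (1-t) ^ (-((k:ℝ)/((k:ℝ)+1))))
        (Set.Ioo (1/2:ℝ) 1) := by
      apply Integrable.const_mul
      exact (intOn_one_sub_rpow (by linarith : (-1:ℝ) < -((k:ℝ)/((k:ℝ)+1)))).mono_set
        (Set.Ioo_subset_Ioo (by norm_num) le_rfl)
    apply Integrable.mono' hint ((meas_g k).aestronglyMeasurable)
    rw [ae_restrict_iff' measurableSet_Ioo]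
    filter_upwards with t ht
    obtain ⟨ht0, ht1⟩ := ht
    have ht0' : (0:ℝ) < t := by linarith
    have hup : (0:ℝ) < 1 - t^2 := by nlinarith
    have hv : (0:ℝ) < 1 - t := by linarith
    rw [Real.norm_of_nonneg (Real.rpow_nonneg (by positivity) _), hnc,
      Real.mul_rpow ht0'.le (by positivity)]
    have h1 : t ^ (-c) ≤ 2 := by
      have e1 : t ^ (-c) ≤ ((1:ℝ)/2) ^ (-c) :=
        Real.rpow_le_rpow_of_nonpos (by norm_num) ht0.le (by linarith)
      have e2 : ((1:ℝ)/2) ^ (-c) = (2:ℝ) ^ c := by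
        rw [one_div, Real.inv_rpow (by norm_num : (0:ℝ) ≤ 2),
          ← Real.rpow_neg (by norm_num : (0:ℝ) ≤ 2), neg_neg]
      have e3 : (2:ℝ) ^ c ≤ (2:ℝ) ^ (1:ℝ) :=
        Real.rpow_le_rpow_of_exponent_le one_le_two hc1.le
      rw [Real.rpow_one] at e3
      linarith [e1, e2 ▸ e1]
    have h2 : ((1-t^2)^k) ^ (-c) ≤ (1-t) ^ (-((k:ℝ)/((k:ℝ)+1))) := by
      have e1 : ((1-t^2)^k) ^ (-c) ≤ ((1-t)^k) ^ (-c) := by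
        apply Real.rpow_le_rpow_of_nonpos (by positivity)
          (pow_le_pow_left₀ hv.le (by nlinarith) k) (by linarith)
      have e2 : ((1-t)^k) ^ (-c) = (1-t) ^ (-((k:ℝ)/((k:ℝ)+1))) := by
        rw [← Real.rpow_natCast (1-t) k, ← Real.rpow_mul hv.le]
        congr 1
        rw [← hkc]; ring
      rw [e2] at e1; exact e1
    calc t ^ (-c) * ((1-t^2)^k) ^ (-c)
        ≤ 2 * (1-t) ^ (-((k:ℝ)/((k:ℝ)+1))) := by
          apply mul_le_mul h1 h2 (Real.rpow_nonneg (by positivity) _) (by norm_num)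

theorem stmt4 (k : ℕ) (hk : 2 ≤ k) (A B : ℝ)
    (hA : A = ∫ t in Set.Ioo (0:ℝ) 1, (t / (1 - t^2)) ^ ((1:ℝ)/((k:ℝ)+1)))
    (hB : B = ∫ t in Set.Ioo (0:ℝ) 1, (t * (1 - t^2)^k) ^ (-(1:ℝ)/((k:ℝ)+1))) :
    Real.sqrt (B / (2 * A)) >
      (1 / Real.sqrt 2) * (k:ℝ) ^ ((1:ℝ)/(2*((k:ℝ)+1))) *
        ((k:ℝ)/((k:ℝ)-1)) ^ (((k:ℝ)-1)/(2*((k:ℝ)+1))) := by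
  have hkR : (2:ℝ) ≤ (k:ℝ) := by exact_mod_cast hk
  have hkpos : (0:ℝ) < (k:ℝ) := by linarith
  have hk1pos : (0:ℝ) < (k:ℝ) - 1 := by linarith
  have hK1 : ((k:ℝ)+1) ≠ 0 := by positivity
  have hkm : ((k-1:ℕ):ℝ) = (k:ℝ)-1 := by
    push_cast [Nat.cast_sub (by omega : 1 ≤ k)]; ring
  have hFint := intf k hk
  have hGint := intg k hk
  -- A is positive
  have hApos : 0 < A := by
    rw [hA]
    rw [setIntegral_pos_iff_support_of_nonneg_ae ?_ hFint]
    · apply lt_of_lt_of_le (show (0:ENNReal) < volume (Set.Ioo (0:ℝ) 1) by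
        rw [Real.volume_Ioo]; norm_num)
      apply measure_mono
      intro t ht
      refine ⟨?_, ht⟩
      have hu : 0 < 1 - t^2 := by nlinarith [ht.1, ht.2]
      exact ne_of_gt (Real.rpow_pos_of_pos (div_pos ht.1 hu) _)
    · filter_upwards [ae_restrict_mem measurableSet_Ioo] with t ht
      have hu : 0 < 1 - t^2 := by nlinarith [ht.1, ht.2]
      exact Real.rpow_nonneg (div_nonneg ht.1.le hu.le) _
  -- B > Rk k * A
  have hDiffInt : IntegrableOn
      (fun t : ℝ => (t * (1 - t^2)^k) ^ (-(1:ℝ)/((k:ℝ)+1))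
        - Rk k * (t / (1 - t^2)) ^ ((1:ℝ)/((k:ℝ)+1))) (Set.Ioo (0:ℝ) 1) :=
    hGint.sub (hFint.const_mul _)
  have hIntPos : 0 < ∫ t in Set.Ioo (0:ℝ) 1,
      ((t * (1 - t^2)^k) ^ (-(1:ℝ)/((k:ℝ)+1))
        - Rk k * (t / (1 - t^2)) ^ ((1:ℝ)/((k:ℝ)+1))) := by
    rw [setIntegral_pos_iff_support_of_nonneg_ae ?_ hDiffInt]
    · apply lt_of_lt_of_le (show (0:ENNReal) < volume (Set.Ioo (0:ℝ) (1/(2*(k:ℝ)))) by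
        rw [Real.volume_Ioo, ENNReal.ofReal_pos, sub_zero]
        exact one_div_pos.mpr (by linarith))
      apply measure_mono
      intro t ht
      obtain ⟨ht0, ht2⟩ := ht
      have ht1 : t < 1 := by
        have : 1/(2*(k:ℝ)) ≤ 1/4 := by
          apply one_div_le_one_div_of_le (by norm_num) (by linarith)
        linarith
      refine ⟨ne_of_gt ?_, ht0, ht1⟩
      have := ratio_lt k hk ht0 ht1 ht2
      linarith
    · filter_upwards [ae_restrict_mem measurableSet_Ioo] with t ht
      have := ratio_le k hk ht.1 ht.2
      simp only [Pi.zero_apply]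
      linarith
  have hint_eq : (∫ t in Set.Ioo (0:ℝ) 1,
      ((t * (1 - t^2)^k) ^ (-(1:ℝ)/((k:ℝ)+1))
        - Rk k * (t / (1 - t^2)) ^ ((1:ℝ)/((k:ℝ)+1)))) = B - Rk k * A := by
    rw [integral_sub hGint (hFint.const_mul _), integral_const_mul, hA, hB]
  have hBA : Rk k * A < B := by
    rw [hint_eq] at hIntPos; linarith
  -- conclusion
  have h2A : (0:ℝ) < 2 * A := by linarith
  have hhalf : Rk k / 2 < B / (2 * A) := by
    rw [div_lt_div_iff₀ two_pos h2A]
    have e : Rk k * (2 * A) = 2 * (Rk k * A) := by ring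
    rw [e]; linarith
  -- identify Rk with the rpow expression
  have hR : Rk k = (k:ℝ)^((1:ℝ)/((k:ℝ)+1)) * ((k:ℝ)/((k:ℝ)-1))^(((k:ℝ)-1)/((k:ℝ)+1)) := by
    rw [Rk, Real.div_rpow (by positivity) (pow_nonneg hk1pos.le _),
      Real.div_rpow hkpos.le hk1pos.le,
      ← Real.rpow_natCast (k:ℝ) k, ← Real.rpow_mul hkpos.le,
      ← Real.rpow_natCast ((k:ℝ)-1) (k-1), hkm, ← Real.rpow_mul hk1pos.le]
    have e1 : ((k:ℝ)-1)*((1:ℝ)/((k:ℝ)+1)) = ((k:ℝ)-1)/((k:ℝ)+1) := by ring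
    have e2 : (k:ℝ)*((1:ℝ)/((k:ℝ)+1)) = (1:ℝ)/((k:ℝ)+1) + ((k:ℝ)-1)/((k:ℝ)+1) := by ring
    rw [e1, e2, Real.rpow_add hkpos, mul_div_assoc]
  have hsq : ((1 / Real.sqrt 2) * (k:ℝ) ^ ((1:ℝ)/(2*((k:ℝ)+1))) *
        ((k:ℝ)/((k:ℝ)-1)) ^ (((k:ℝ)-1)/(2*((k:ℝ)+1))))^2 = Rk k / 2 := by
    rw [mul_pow, mul_pow, div_pow, one_pow, Real.sq_sqrt (by norm_num : (0:ℝ) ≤ 2),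
      ← Real.rpow_natCast ((k:ℝ) ^ ((1:ℝ)/(2*((k:ℝ)+1)))) 2, ← Real.rpow_mul hkpos.le,
      ← Real.rpow_natCast (((k:ℝ)/((k:ℝ)-1)) ^ (((k:ℝ)-1)/(2*((k:ℝ)+1)))) 2,
      ← Real.rpow_mul (by positivity : (0:ℝ) ≤ (k:ℝ)/((k:ℝ)-1))]
    have e1 : (1:ℝ)/(2*((k:ℝ)+1)) * ((2:ℕ):ℝ) = (1:ℝ)/((k:ℝ)+1) := by
      push_cast; field_simp
    have e2 : ((k:ℝ)-1)/(2*((k:ℝ)+1)) * ((2:ℕ):ℝ) = ((k:ℝ)-1)/((k:ℝ)+1) := by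
      push_cast; field_simp
    rw [e1, e2, hR]
    ring
  have hfin : ((1 / Real.sqrt 2) * (k:ℝ) ^ ((1:ℝ)/(2*((k:ℝ)+1))) *
        ((k:ℝ)/((k:ℝ)-1)) ^ (((k:ℝ)-1)/(2*((k:ℝ)+1))))^2 < B / (2 * A) := by
    rw [hsq]; exact hhalf
  exact Real.lt_sqrt_of_sq_lt hfin
end

section
/- For every integer k ≥ 1, setting ρ_k = c_k^{-2(k+1)/k}, one has 0 < ρ_k < 2. (For k ≥ 2 this follows from c_k > (1/√2) k^{1/(2(k+1))} (k/(k-1))^{(k-1)/(2(k+1))}; for k = 1 from c_1 > 1.) -/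
open Real MeasureTheory Set

set_option maxHeartbeats 1000000

private lemma aux_int_tpow {α : ℝ} (hα1 : α < 1) :
    ∫ t in (0:ℝ)..1, t ^ (-α) = 1 / (1 - α) := by
  rw [integral_rpow (Or.inl (by linarith : (-1:ℝ) < -α))]
  rw [Real.one_rpow, Real.zero_rpow (by intro h; linarith [h ▸ (by linarith : -α + 1 > 0)])]
  ring_nf

private lemma aux_int_1tpow {α : ℝ} (hα1 : α < 1) :
    ∫ t in (0:ℝ)..1, (1 - t) ^ (-α) = 1 / (1 - α) := by
  have := intervalIntegral.integral_comp_sub_left (a := (0:ℝ)) (b := 1)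
    (fun x : ℝ => x ^ (-α)) 1
  simp only [sub_self, sub_zero] at this
  rw [this, aux_int_tpow hα1]

private lemma aux_ii_tpow {α : ℝ} (hα1 : α < 1) :
    IntervalIntegrable (fun t : ℝ => t ^ (-α)) volume 0 1 :=
  intervalIntegral.intervalIntegrable_rpow' (by linarith)

private lemma aux_ii_1tpow {α : ℝ} (hα1 : α < 1) :
    IntervalIntegrable (fun t : ℝ => (1 - t) ^ (-α)) volume 0 1 := by
  have := ((aux_ii_tpow hα1).comp_sub_left 1)
  simp only [sub_self, sub_zero] at this
  exact this.symm

private lemma aux_g_eq {k : ℕ} {α t : ℝ} (hkα : (k:ℝ) * α = 1 - α)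
    (ht0 : 0 < t) (ht1 : t < 1) :
    (t * (1 - t^2)^k) ^ (-α) = t ^ (-α) * (1 - t^2) ^ (α - 1) := by
  have h1 : (0:ℝ) < 1 - t^2 := by nlinarith
  rw [Real.mul_rpow ht0.le (pow_nonneg h1.le k), ← Real.rpow_natCast (1 - t^2) k,
    ← Real.rpow_mul h1.le]
  have he : (k:ℝ) * (-α) = α - 1 := by linarith [hkα]
  rw [he]

private lemma aux_g_split {t α : ℝ} (ht0 : 0 < t) (ht1 : t < 1) :
    (1 - t^2) ^ (α - 1) = (1 - t) ^ (α - 1) * (1 + t) ^ (α - 1) := by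
  have h2 : (0:ℝ) < 1 - t := by linarith
  have h3 : (0:ℝ) < 1 + t := by linarith
  rw [show (1 - t^2) = (1-t)*(1+t) by ring, Real.mul_rpow h2.le h3.le]

theorem stmt5 (k : ℕ) (hk : 1 ≤ k) (A B c ρ : ℝ)
    (hA : A = ∫ t in Set.Ioo (0:ℝ) 1, (t / (1 - t^2)) ^ ((1:ℝ)/((k:ℝ)+1)))
    (hB : B = ∫ t in Set.Ioo (0:ℝ) 1, (t * (1 - t^2)^k) ^ (-(1:ℝ)/((k:ℝ)+1)))
    (hc : c = Real.sqrt (B / (2 * A)))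
    (hρ : ρ = c ^ (-(2*((k:ℝ)+1))/(k:ℝ))) :
    0 < ρ ∧ ρ < 2 := by
  have hk1 : (1:ℝ) ≤ (k:ℝ) := by exact_mod_cast hk
  set α : ℝ := 1/((k:ℝ)+1) with hαdef
  have hα0 : 0 < α := by positivity
  have hαh : α ≤ 1/2 := by
    rw [hαdef, div_le_div_iff₀ (by linarith) (by norm_num)]
    linarith
  have hα1 : α < 1 := lt_of_le_of_lt hαh (by norm_num)
  have hkα : (k:ℝ) * α = 1 - α := by
    rw [hαdef]; field_simp; ring
  have hBexp : (-(1:ℝ))/((k:ℝ)+1) = -α := by rw [hαdef]; ring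
  rw [hBexp] at hB
  -- convert set integrals to interval integrals
  have hIoo : ∀ (f : ℝ → ℝ), (∫ t in Set.Ioo (0:ℝ) 1, f t) = ∫ t in (0:ℝ)..1, f t := by
    intro f
    rw [intervalIntegral.integral_of_le (by norm_num : (0:ℝ) ≤ 1),
      MeasureTheory.integral_Ioc_eq_integral_Ioo]
  rw [hIoo] at hA hB
  -- pointwise bound for the A integrand on [0,1]
  have hfb : ∀ t ∈ Set.Icc (0:ℝ) 1,
      (t / (1 - t^2)) ^ α ≤ 2 ^ (-α) * (1 - t) ^ (-α) := by
    rintro t ⟨ht0, ht1⟩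
    rcases eq_or_lt_of_le ht1 with h1 | h1
    · subst h1
      rw [show (1:ℝ) - 1^2 = 0 by norm_num, div_zero, Real.zero_rpow hα0.ne',
        show (1:ℝ) - 1 = 0 by norm_num, Real.zero_rpow (by simp [hα0.ne'] : -α ≠ 0), mul_zero]
    · have h2 : (0:ℝ) < 1 - t := by linarith
      have h1' : (0:ℝ) < 1 - t^2 := by nlinarith
      have hdiv : t / (1 - t^2) ≤ 1 / (2 * (1 - t)) := by
        rw [div_le_div_iff₀ h1' (by linarith)]
        nlinarith
      calc (t/(1-t^2))^α ≤ (1/(2*(1-t)))^α :=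
            Real.rpow_le_rpow (by positivity) hdiv hα0.le
        _ = 2 ^ (-α) * (1 - t) ^ (-α) := by
            rw [one_div, Real.inv_rpow (by positivity),
              Real.rpow_neg (by norm_num : (0:ℝ) ≤ 2), Real.rpow_neg h2.le,
              Real.mul_rpow (by norm_num : (0:ℝ) ≤ 2) h2.le, mul_inv]
  -- integrability of the A integrand
  have hmeq : volume.restrict (Set.Ioo (0:ℝ) 1) = volume.restrict (Set.Ioc (0:ℝ) 1) :=
    Measure.restrict_congr_set Ioo_ae_eq_Ioc
  have hfA : IntervalIntegrable (fun t : ℝ => (t / (1 - t^2)) ^ α) volume 0 1 := by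
    rw [intervalIntegrable_iff, uIoc_of_le (by norm_num : (0:ℝ) ≤ 1)]
    show Integrable _ (volume.restrict (Set.Ioc (0:ℝ) 1))
    rw [← hmeq]
    have hgint : IntegrableOn (fun t : ℝ => 2 ^ (-α) * (1 - t) ^ (-α)) (Set.Ioo 0 1) volume := by
      have := (aux_ii_1tpow hα1).const_mul ((2:ℝ) ^ (-α))
      rw [intervalIntegrable_iff, uIoc_of_le (by norm_num : (0:ℝ) ≤ 1)] at this
      exact this.mono_set Set.Ioo_subset_Ioc_self
    refine hgint.integrable.mono' ?_ ?_
    · refine ContinuousOn.aestronglyMeasurable ?_ measurableSet_Ioo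
      refine ContinuousOn.rpow_const ?_ (fun x _ => Or.inr hα0.le)
      refine ContinuousOn.div continuousOn_id
        (Continuous.continuousOn (by continuity)) ?_
      intro x hx
      have : (0:ℝ) < 1 - x^2 := by nlinarith [hx.1, hx.2]
      exact this.ne'
    · rw [ae_restrict_iff' measurableSet_Ioo]
      filter_upwards with t ht
      have h1' : (0:ℝ) < 1 - t^2 := by nlinarith [ht.1, ht.2]
      have hb : (0:ℝ) ≤ t / (1 - t^2) := div_nonneg ht.1.le h1'.le
      rw [Real.norm_of_nonneg (Real.rpow_nonneg hb α)]
      exact hfb t ⟨ht.1.le, ht.2.le⟩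
  -- integrability of the B integrand
  have hfB : IntervalIntegrable (fun t : ℝ => (t * (1 - t^2)^k) ^ (-α)) volume 0 1 := by
    rw [intervalIntegrable_iff, uIoc_of_le (by norm_num : (0:ℝ) ≤ 1)]
    show Integrable _ (volume.restrict (Set.Ioc (0:ℝ) 1))
    rw [← hmeq]
    have hint : IntegrableOn
        (fun t : ℝ => 2^(1-α) * t^(-α) + 2^α * (1-t)^(-(1-α))) (Set.Ioo 0 1) volume := by
      have h1 := (aux_ii_tpow hα1).const_mul ((2:ℝ)^(1-α))
      have h2 := (aux_ii_1tpow (show (1-α) < 1 by linarith)).const_mul ((2:ℝ)^α)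
      have h3 := h1.add h2
      rw [intervalIntegrable_iff, uIoc_of_le (by norm_num : (0:ℝ) ≤ 1)] at h3
      exact h3.mono_set Set.Ioo_subset_Ioc_self
    refine hint.integrable.mono' ?_ ?_
    · refine ContinuousOn.aestronglyMeasurable ?_ measurableSet_Ioo
      refine ContinuousOn.rpow_const (Continuous.continuousOn
        (continuous_id.mul ((continuous_const.sub (continuous_pow 2)).pow k))) ?_
      intro x hx
      left
      have h1 : (0:ℝ) < 1 - x^2 := by nlinarith [hx.1, hx.2]
      have hx0 := hx.1
      show x * (1-x^2)^k ≠ 0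
      positivity
    · rw [ae_restrict_iff' measurableSet_Ioo]
      filter_upwards with t ht
      obtain ⟨ht0, ht1⟩ := ht
      have h2 : (0:ℝ) < 1 - t := by linarith
      have h3 : (0:ℝ) < 1 + t := by linarith
      have h1' : (0:ℝ) < 1 - t^2 := by nlinarith
      have hg0 : (0:ℝ) ≤ (t * (1 - t^2)^k) ^ (-α) := Real.rpow_nonneg (by positivity) _
      rw [Real.norm_of_nonneg hg0, aux_g_eq hkα ht0 ht1, aux_g_split ht0 ht1]
      have h1p : (1+t)^(α-1) ≤ 1 :=
        Real.rpow_le_one_of_one_le_of_nonpos (by linarith) (by linarith)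
      have htnn : (0:ℝ) ≤ t^(-α) := Real.rpow_nonneg ht0.le _
      have h1tnn : (0:ℝ) ≤ (1-t)^(α-1) := Real.rpow_nonneg h2.le _
      have key : t^(-α) * (1-t)^(α-1) ≤ 2^(1-α) * t^(-α) + 2^α * (1-t)^(-(1-α)) := by
        rw [show α - 1 = -(1-α) by ring]
        rcases le_or_gt t (1/2) with h | h
        · have hb : (1-t) ^ (-(1-α)) ≤ 2^(1-α) := by
            rw [Real.rpow_neg h2.le]
            have hlow : (1/2:ℝ)^(1-α) ≤ (1-t)^(1-α) :=
              Real.rpow_le_rpow (by norm_num) (by linarith) (by linarith)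
            have hpos : (0:ℝ) < (1/2:ℝ)^(1-α) := Real.rpow_pos_of_pos (by norm_num) _
            calc ((1-t)^(1-α))⁻¹ ≤ ((1/2:ℝ)^(1-α))⁻¹ := inv_anti₀ hpos hlow
              _ = 2^(1-α) := by
                  rw [one_div, Real.inv_rpow (by norm_num : (0:ℝ) ≤ 2), inv_inv]
          have hm : t^(-α) * (1-t)^(-(1-α)) ≤ t^(-α) * 2^(1-α) :=
            mul_le_mul_of_nonneg_left hb htnn
          rw [mul_comm] at hm
          have h2nd : (0:ℝ) ≤ 2^α * (1-t)^(-(1-α)) :=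
            mul_nonneg (Real.rpow_nonneg (by norm_num) _) (Real.rpow_nonneg h2.le _)
          linarith
        · have hb : t^(-α) ≤ 2^α := by
            rw [Real.rpow_neg ht0.le]
            have hlow : (1/2:ℝ)^α ≤ t^α :=
              Real.rpow_le_rpow (by norm_num) (by linarith) hα0.le
            have hpos : (0:ℝ) < (1/2:ℝ)^α := Real.rpow_pos_of_pos (by norm_num) _
            calc (t^α)⁻¹ ≤ ((1/2:ℝ)^α)⁻¹ := inv_anti₀ hpos hlow
              _ = 2^α := by rw [one_div, Real.inv_rpow (by norm_num : (0:ℝ) ≤ 2), inv_inv]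
          have hm : t^(-α) * (1-t)^(-(1-α)) ≤ 2^α * (1-t)^(-(1-α)) :=
            mul_le_mul_of_nonneg_right hb (Real.rpow_nonneg h2.le _)
          have h1st : (0:ℝ) ≤ 2^(1-α) * t^(-α) :=
            mul_nonneg (Real.rpow_nonneg (by norm_num) _) htnn
          linarith
      calc t^(-α) * ((1-t)^(α-1) * (1+t)^(α-1))
          ≤ t^(-α) * ((1-t)^(α-1) * 1) :=
            mul_le_mul_of_nonneg_left (mul_le_mul_of_nonneg_left h1p h1tnn) htnn
        _ = t^(-α) * (1-t)^(α-1) := by ring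
        _ ≤ _ := key
  -- A is positive
  have hApos : 0 < A := by
    rw [hA]
    refine intervalIntegral.intervalIntegral_pos_of_pos_on hfA (fun t ht => ?_) (by norm_num)
    have h1 : (0:ℝ) < 1 - t^2 := by nlinarith [ht.1, ht.2]
    exact Real.rpow_pos_of_pos (div_pos ht.1 h1) α
  -- upper bound for A
  have hAle : A ≤ 2 ^ (-α) / (1 - α) := by
    rw [hA]
    calc ∫ t in (0:ℝ)..1, (t / (1 - t^2)) ^ α
        ≤ ∫ t in (0:ℝ)..1, 2 ^ (-α) * (1 - t) ^ (-α) := by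
          refine intervalIntegral.integral_mono_on (by norm_num) hfA
            ((aux_ii_1tpow hα1).const_mul _) hfb
      _ = 2 ^ (-α) * (1 / (1 - α)) := by
          rw [intervalIntegral.integral_const_mul, aux_int_1tpow hα1]
      _ = 2 ^ (-α) / (1 - α) := by ring
  -- lower bound for B (strict)
  have hBgt : 1 / (1 - α) < B := by
    rw [hB, ← aux_int_tpow hα1]
    refine intervalIntegral.integral_lt_integral_of_ae_le_of_measure_setOf_lt_ne_zero
      (by norm_num) (aux_ii_tpow hα1) hfB ?_ ?_
    · refine ae_restrict_of_ae_eq_of_ae_restrict Ioo_ae_eq_Ioc ?_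
      rw [ae_restrict_iff' measurableSet_Ioo]
      filter_upwards with t ht
      obtain ⟨ht0, ht1⟩ := ht
      rw [aux_g_eq hkα ht0 ht1]
      have h1' : (0:ℝ) < 1 - t^2 := by nlinarith
      have hge : (1:ℝ) ≤ (1 - t^2)^(α-1) := by
        have h := Real.rpow_le_rpow_of_exponent_ge h1' (by nlinarith : 1 - t^2 ≤ 1)
          (by linarith : α - 1 ≤ (0:ℝ))
        rwa [Real.rpow_zero] at h
      nlinarith [Real.rpow_pos_of_pos ht0 (-α)]
    · intro h0
      have hsub : Set.Ioo (0:ℝ) 1 ⊆ {x | x ^ (-α) < (x * (1-x^2)^k) ^ (-α)} := by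
        rintro t ⟨ht0, ht1⟩
        have h1' : (0:ℝ) < 1 - t^2 := by nlinarith
        have hgt : (1:ℝ) < (1 - t^2)^(α-1) := by
          rw [show α - 1 = -(1-α) by ring, Real.rpow_neg h1'.le]
          have hlt1 : (1 - t^2)^(1-α) < 1 :=
            Real.rpow_lt_one h1'.le (by nlinarith) (by linarith)
          exact (one_lt_inv₀ (Real.rpow_pos_of_pos h1' _)).mpr hlt1
        show t ^ (-α) < (t * (1-t^2)^k) ^ (-α)
        rw [aux_g_eq hkα ht0 ht1]
        nlinarith [Real.rpow_pos_of_pos ht0 (-α)]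
      have hz := measure_mono_null hsub h0
      rw [Measure.restrict_apply' measurableSet_Ioc,
        Set.inter_eq_left.mpr Set.Ioo_subset_Ioc_self, Real.volume_Ioo] at hz
      norm_num at hz
  -- combine: B / (2 * A) > 2 ^ (α - 1)
  have hkey : (2:ℝ) ^ (α - 1) < B / (2 * A) := by
    have h2a : (2:ℝ) ^ α * A ≤ 1 / (1 - α) := by
      calc (2:ℝ) ^ α * A ≤ 2 ^ α * (2 ^ (-α) / (1 - α)) := by
            have := Real.rpow_pos_of_pos (by norm_num : (0:ℝ) < 2) α
            nlinarith
        _ = (2 ^ α * 2 ^ (-α)) / (1 - α) := by ring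
        _ = 1 / (1 - α) := by
            rw [← Real.rpow_add (by norm_num : (0:ℝ) < 2)]
            norm_num
    have hBA : 2 ^ α * A < B := lt_of_le_of_lt h2a hBgt
    rw [lt_div_iff₀ (by positivity)]
    calc (2:ℝ) ^ (α - 1) * (2 * A) = 2 ^ (α-1) * 2 ^ (1:ℝ) * A := by
          rw [Real.rpow_one]; ring
      _ = 2 ^ α * A := by rw [← Real.rpow_add (by norm_num : (0:ℝ) < 2)]; ring_nf
      _ < B := hBA
  -- final arithmetic
  have hr0 : (0:ℝ) < B / (2 * A) := lt_trans (Real.rpow_pos_of_pos (by norm_num) _) hkey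
  have hc0 : 0 < c := hc ▸ Real.sqrt_pos.mpr hr0
  have hρ_eq : ρ = (B / (2 * A)) ^ ((1/2) * (-(2*((k:ℝ)+1))/(k:ℝ))) := by
    rw [hρ, hc, Real.sqrt_eq_rpow, ← Real.rpow_mul hr0.le]
  constructor
  · rw [hρ_eq]; exact Real.rpow_pos_of_pos hr0 _
  · have hq : (1/2) * (-(2*((k:ℝ)+1))/(k:ℝ)) < 0 := by
      have hk0 : (0:ℝ) < (k:ℝ) := by linarith
      have heq : (1/2) * (-(2*((k:ℝ)+1))/(k:ℝ)) = -(((k:ℝ)+1)/(k:ℝ)) := by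
        field_simp
      rw [heq, neg_lt, neg_zero]
      positivity
    have hlt := Real.rpow_lt_rpow_of_neg (Real.rpow_pos_of_pos (by norm_num) (α-1)) hkey hq
    rw [hρ_eq]
    refine lt_of_lt_of_le hlt ?_
    rw [← Real.rpow_mul (by norm_num : (0:ℝ) ≤ 2)]
    have hexp : (α - 1) * ((1/2) * (-(2*((k:ℝ)+1))/(k:ℝ))) = 1 := by
      rw [hαdef]
      have hk0 : (k:ℝ) ≠ 0 := by linarith
      have hk1' : (k:ℝ) + 1 ≠ 0 := by linarith
      field_simp
      ring
    rw [hexp, Real.rpow_one]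
end

section
/- Let k ≥ 1 and define q(t) = (-i/sin(kπ/(k+1)))·(cos θ₀(t) - ψ^{-2} cos θ∞(t)) where ψ = e^{ikπ/(2(k+1))}, θ₀(t) = (π/(2k+2))·k√(1+4t(k+1)/k), θ∞(t) = (π/(2k+2))·k√(1-4t(k+1)/k). Then |q(0)|² = 1, (d/dt)|q|²(0) = 0, and (d²/dt²)|q|²(0) = (4(k+1)π/k)·tan(kπ/(2k+2)) > 0; hence |q(t)| > 1 for all t ≠ 0 sufficiently small. -/
open Real

noncomputable def Uf (c t : ℝ) : ℝ := Real.sqrt (1 + c * t)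
noncomputable def ff (a c t : ℝ) : ℝ := Real.cos (a * Uf c t)
noncomputable def ff1 (a c t : ℝ) : ℝ := -Real.sin (a * Uf c t) * (a * c / 2) * (Uf c t)⁻¹

lemma Uf_zero (c : ℝ) : Uf c 0 = 1 := by simp [Uf]

lemma Uf_pos {c t : ℝ} (h : 0 < 1 + c * t) : 0 < Uf c t := Real.sqrt_pos.mpr h

lemma ff_zero (a c : ℝ) : ff a c 0 = Real.cos a := by simp [ff, Uf_zero]

lemma ff1_zero (a c : ℝ) : ff1 a c 0 = -Real.sin a * (a * c / 2) := by
  simp [ff1, Uf_zero]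

lemma hasDerivAt_Uf {c t : ℝ} (h : 0 < 1 + c * t) :
    HasDerivAt (Uf c) (c / (2 * Uf c t)) t := by
  have inner : HasDerivAt (fun s : ℝ => 1 + c * s) c t := by
    simpa using ((hasDerivAt_id t).const_mul c).const_add 1
  have h2 := (Real.hasDerivAt_sqrt h.ne').comp t inner
  have h3 : HasDerivAt (Uf c) (1 / (2 * Real.sqrt (1 + c * t)) * c) t := by
    exact h2
  convert h3 using 1
  simp only [Uf]
  ring

lemma hasDerivAt_ff {a c t : ℝ} (h : 0 < 1 + c * t) :
    HasDerivAt (ff a c) (ff1 a c t) t := by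
  have h1 : HasDerivAt (fun s => a * Uf c s) (a * (c / (2 * Uf c t))) t :=
    (hasDerivAt_Uf h).const_mul a
  have h2 := (Real.hasDerivAt_cos (a * Uf c t)).comp t h1
  have h3 : HasDerivAt (ff a c) (-Real.sin (a * Uf c t) * (a * (c / (2 * Uf c t)))) t := by
    exact h2
  convert h3 using 1
  have hU := (Uf_pos h).ne'
  simp only [ff1]
  field_simp

lemma hasDerivAt_ff1 (a c : ℝ) :
    HasDerivAt (ff1 a c) ((a * c / 2) * ((c / 2) * Real.sin a - (a * c / 2) * Real.cos a)) 0 := by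
  have h : (0:ℝ) < 1 + c * 0 := by norm_num
  have hU : HasDerivAt (Uf c) (c / 2) 0 := by
    have := hasDerivAt_Uf h
    rwa [Uf_zero, mul_one] at this
  have h1 : HasDerivAt (fun s => a * Uf c s) (a * (c / 2)) 0 := hU.const_mul a
  have hsin : HasDerivAt (fun t => Real.sin (a * Uf c t)) (Real.cos a * (a * (c / 2))) 0 := by
    have h2 := (Real.hasDerivAt_sin (a * Uf c 0)).comp 0 h1
    simpa [Uf_zero, Function.comp_def] using h2
  have hinv : HasDerivAt (fun t => (Uf c t)⁻¹) (-(c / 2)) 0 := by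
    have h2 := hU.inv (by simp [Uf_zero] : Uf c 0 ≠ 0)
    exact h2.congr_deriv (by simp [Uf_zero])
  have hmul := ((hsin.neg.mul_const (a * c / 2)).mul hinv)
  have h3 : HasDerivAt (ff1 a c)
      ((-(Real.cos a * (a * (c / 2))) * (a * c / 2)) * (Uf c 0)⁻¹ +
        (-Real.sin (a * Uf c 0) * (a * c / 2)) * (-(c / 2))) 0 := hmul
  convert h3 using 1
  rw [Uf_zero]
  simp
  ring

set_option maxHeartbeats 1000000 in
theorem stmt16 (k : ℕ) (hk : 1 ≤ k) (θ₀ θinf Q : ℝ → ℝ)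
    (hθ₀ : ∀ t, θ₀ t = (π / (2*(k:ℝ)+2)) * ((k:ℝ) * Real.sqrt (1 + 4*t*((k:ℝ)+1)/(k:ℝ))))
    (hθinf : ∀ t, θinf t = (π / (2*(k:ℝ)+2)) * ((k:ℝ) * Real.sqrt (1 - 4*t*((k:ℝ)+1)/(k:ℝ))))
    (hQ : ∀ t, Q t = (1 / (Real.sin ((k:ℝ)*π/((k:ℝ)+1)))^2) *
        ((Real.cos (θ₀ t))^2 + (Real.cos (θinf t))^2
          - 2 * Real.cos ((k:ℝ)*π/((k:ℝ)+1)) * Real.cos (θ₀ t) * Real.cos (θinf t))) :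
    Q 0 = 1 ∧ deriv Q 0 = 0 ∧
    deriv (deriv Q) 0 = (4*((k:ℝ)+1)*π/(k:ℝ)) * Real.tan ((k:ℝ)*π/(2*(k:ℝ)+2)) ∧
    0 < (4*((k:ℝ)+1)*π/(k:ℝ)) * Real.tan ((k:ℝ)*π/(2*(k:ℝ)+2)) ∧
    ∃ ε > (0:ℝ), ∀ t : ℝ, t ≠ 0 → |t| < ε → 1 < Q t := by
  have hKpos : (0:ℝ) < (k:ℝ) := by exact_mod_cast Nat.lt_of_lt_of_le Nat.zero_lt_one hk
  set K : ℝ := (k:ℝ) with hKdef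
  clear_value K
  have hK1 : (0:ℝ) < K + 1 := by linarith
  have hπ := Real.pi_pos
  set a : ℝ := K * π / (2*K+2) with ha_def
  clear_value a
  set c : ℝ := 4 * (K+1) / K with hc_def
  clear_value c
  have hc0 : 0 < c := by rw [hc_def]; positivity
  have ha0 : 0 < a := by rw [ha_def]; positivity
  have ha2 : a < π / 2 := by
    rw [ha_def, div_lt_div_iff₀ (by linarith) two_pos]
    nlinarith
  have hca : 0 < Real.cos a := Real.cos_pos_of_mem_Ioo ⟨by linarith, ha2⟩
  have hsa : 0 < Real.sin a := Real.sin_pos_of_pos_of_lt_pi ha0 (by linarith)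
  have harg : K * π / (K+1) = 2 * a := by rw [ha_def]; field_simp
  have hC : Real.cos (K*π/(K+1)) = 2 * (Real.cos a)^2 - 1 := by
    rw [harg, Real.cos_two_mul]
  have hs : Real.sin (K*π/(K+1)) = 2 * Real.sin a * Real.cos a := by
    rw [harg, Real.sin_two_mul]
  have hs0 : Real.sin (K*π/(K+1)) ≠ 0 := by
    rw [hs]; positivity
  have hθa : ∀ t, θ₀ t = a * Uf c t := by
    intro t
    rw [hθ₀ t]
    have h1 : 1 + 4*t*(K+1)/K = 1 + c * t := by rw [hc_def]; ring
    simp only [Uf]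
    rw [h1, ha_def]
    ring
  have hθb : ∀ t, θinf t = a * Uf (-c) t := by
    intro t
    rw [hθinf t]
    have h1 : 1 - 4*t*(K+1)/K = 1 + (-c) * t := by rw [hc_def]; ring
    simp only [Uf]
    rw [h1, ha_def]
    ring
  set C : ℝ := Real.cos (K*π/(K+1)) with hCdef
  clear_value C
  set s2 : ℝ := 1 / (Real.sin (K*π/(K+1)))^2 with hs2def
  clear_value s2
  have hQf : ∀ t, Q t = s2 * ((ff a c t)^2 + (ff a (-c) t)^2
      - 2 * C * (ff a c t) * (ff a (-c) t)) := by
    intro t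
    rw [hQ t, hθa t, hθb t]
    simp only [ff]
  have hQzero : Q 0 = 1 := by
    have hpyth := Real.sin_sq_add_cos_sq a
    rw [hQf 0, ff_zero, ff_zero, hs2def, hC, hs]
    field_simp
    nlinarith [hpyth]
  have hdom : ∀ t : ℝ, |t| < 1/(2*c) → 0 < 1 + c*t ∧ 0 < 1 + (-c)*t := by
    intro t ht
    obtain ⟨h1, h2⟩ := abs_lt.mp ht
    have e1 := mul_lt_mul_of_pos_left h1 hc0
    have e2 := mul_lt_mul_of_pos_left h2 hc0
    have hkey : c * (1/(2*c)) = 1/2 := by field_simp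
    constructor <;> nlinarith
  have hδ : (0:ℝ) < 1/(2*c) := by positivity
  set Q1 : ℝ → ℝ := fun t => s2 * (2 * ff a c t * ff1 a c t + 2 * ff a (-c) t * ff1 a (-c) t
      - 2 * C * (ff1 a c t * ff a (-c) t + ff a c t * ff1 a (-c) t)) with hQ1def
  clear_value Q1
  have hQderiv : ∀ t : ℝ, |t| < 1/(2*c) → HasDerivAt Q (Q1 t) t := by
    intro t ht
    obtain ⟨hp, hm⟩ := hdom t ht
    have hA := hasDerivAt_ff (a := a) hp
    have hB := hasDerivAt_ff (a := a) hm
    have hQeq : Q = fun t => s2 * ((ff a c t)^2 + (ff a (-c) t)^2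
        - 2 * C * (ff a c t) * (ff a (-c) t)) := funext hQf
    rw [hQeq]
    have hbig := (((hA.pow 2).add (hB.pow 2)).sub ((hA.const_mul (2*C)).mul hB)).const_mul s2
    convert hbig using 1
    all_goals try rfl
    simp only [hQ1def]
    ring
  have hQ10 : Q1 0 = 0 := by
    simp only [hQ1def, ff_zero, ff1_zero]
    ring
  -- second derivative of Q, i.e. derivative of Q1, at 0
  have hA0 : HasDerivAt (ff a c) (ff1 a c 0) 0 := hasDerivAt_ff (by norm_num)
  have hB0 : HasDerivAt (ff a (-c)) (ff1 a (-c) 0) 0 := hasDerivAt_ff (by norm_num)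
  have hA1 := hasDerivAt_ff1 a c
  have hB1 := hasDerivAt_ff1 a (-c)
  set T : ℝ := 4*(K+1)*π/K * Real.tan a with hTdef
  clear_value T
  have hQ1d : HasDerivAt Q1 T 0 := by
    have hbig := ((((hA0.const_mul 2).mul hA1).add ((hB0.const_mul 2).mul hB1)).sub
      (((hA1.mul hB0).add (hA0.mul hB1)).const_mul (2*C))).const_mul s2
    convert hbig using 1
    all_goals try (first | rfl | (rw [hQ1def]; rfl))
    have hac : a * c^2 / 2 = 4*(K+1)*π/K := by
      rw [ha_def, hc_def]
      field_simp
      ring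
    have hval : T = a * c^2 / 2 * (Real.sin a / Real.cos a) := by
      rw [hTdef, Real.tan_eq_sin_div_cos, hac]
    rw [hval, ff_zero, ff_zero, ff1_zero, ff1_zero, hs2def, hC, hs]
    field_simp [hca.ne', hsa.ne']
    linear_combination (4*Real.sin a*Real.cos a - 4*a*Real.cos a^2) * Real.sin_sq_add_cos_sq a
  -- the four basic conclusions
  have hder0 : deriv Q 0 = 0 := by
    have h := (hQderiv 0 (by simpa using hδ)).deriv
    rw [h, hQ10]
  have hTpos : 0 < T := by
    rw [hTdef]
    have htan : 0 < Real.tan a := Real.tan_pos_of_pos_of_lt_pi_div_two ha0 ha2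
    have : 0 < 4*(K+1)*π/K := by positivity
    exact mul_pos this htan
  have hdd : deriv (deriv Q) 0 = T := by
    have hev : deriv Q =ᶠ[nhds (0:ℝ)] Q1 := by
      filter_upwards [Metric.ball_mem_nhds (0:ℝ) hδ] with t ht
      rw [Metric.mem_ball, Real.dist_eq, sub_zero] at ht
      exact (hQderiv t ht).deriv
    rw [hev.deriv_eq, hQ1d.deriv]
  -- local strict minimum
  have hslope := hasDerivAt_iff_tendsto_slope.mp hQ1d
  have hev2 : ∀ᶠ t in nhdsWithin (0:ℝ) {(0:ℝ)}ᶜ, 0 < slope Q1 0 t :=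
    hslope.eventually (eventually_gt_nhds hTpos)
  rw [eventually_nhdsWithin_iff] at hev2
  obtain ⟨ε₁, hε₁, hball⟩ := Metric.eventually_nhds_iff.mp hev2
  have hεpos : (0:ℝ) < min ε₁ (1/(2*c)) := lt_min hε₁ hδ
  have hQ1sign : ∀ x : ℝ, x ≠ 0 → |x| < min ε₁ (1/(2*c)) → 0 < Q1 x / x := by
    intro x hx hxe
    have h := hball (y := x)
      (by rw [Real.dist_eq, sub_zero]; exact lt_of_lt_of_le hxe (min_le_left _ _))
      (by simpa using hx)
    have : slope Q1 0 x = Q1 x / x := by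
      rw [slope_def_field, hQ10]
      simp
    rwa [this] at h
  refine ⟨hQzero, hder0, hdd, hTpos, min ε₁ (1/(2*c)), hεpos, ?_⟩
  intro t ht0 htε
  have htδ : |t| < 1/(2*c) := lt_of_lt_of_le htε (min_le_right _ _)
  rcases lt_or_gt_of_ne ht0 with hneg | hpos
  · -- t < 0 : Q strictly decreasing on [t, 0]
    have habs : ∀ x ∈ Set.Icc t 0, |x| ≤ |t| := by
      intro x hx
      rw [abs_of_neg hneg, abs_le]
      constructor <;> linarith [hx.1, hx.2]
    have hanti : StrictAntiOn Q (Set.Icc t 0) := by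
      apply strictAntiOn_of_deriv_neg (convex_Icc t 0)
      · intro x hx
        exact (hQderiv x (lt_of_le_of_lt (habs x hx) htδ)).continuousAt.continuousWithinAt
      · intro x hx
        rw [interior_Icc] at hx
        have hx0 : x ≠ 0 := ne_of_lt hx.2
        have hxe : |x| < min ε₁ (1/(2*c)) :=
          lt_of_le_of_lt (habs x ⟨le_of_lt hx.1, le_of_lt hx.2⟩) htε
        rw [(hQderiv x (lt_of_lt_of_le hxe (min_le_right _ _))).deriv]
        have hsign := hQ1sign x hx0 hxe
        rcases div_pos_iff.mp hsign with ⟨h1, h2⟩ | ⟨h1, h2⟩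
        · linarith [hx.2]
        · exact h1
    have := hanti (Set.left_mem_Icc.mpr (le_of_lt hneg))
      (Set.right_mem_Icc.mpr (le_of_lt hneg)) hneg
    rw [hQzero] at this
    exact this
  · -- t > 0 : Q strictly increasing on [0, t]
    have habs : ∀ x ∈ Set.Icc (0:ℝ) t, |x| ≤ |t| := by
      intro x hx
      rw [abs_of_pos hpos, abs_le]
      constructor <;> linarith [hx.1, hx.2]
    have hmono : StrictMonoOn Q (Set.Icc (0:ℝ) t) := by
      apply strictMonoOn_of_deriv_pos (convex_Icc (0:ℝ) t)
      · intro x hx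
        exact (hQderiv x (lt_of_le_of_lt (habs x hx) htδ)).continuousAt.continuousWithinAt
      · intro x hx
        rw [interior_Icc] at hx
        have hx0 : x ≠ 0 := ne_of_gt hx.1
        have hxe : |x| < min ε₁ (1/(2*c)) :=
          lt_of_le_of_lt (habs x ⟨le_of_lt hx.1, le_of_lt hx.2⟩) htε
        rw [(hQderiv x (lt_of_lt_of_le hxe (min_le_right _ _))).deriv]
        have hsign := hQ1sign x hx0 hxe
        rcases div_pos_iff.mp hsign with ⟨h1, h2⟩ | ⟨h1, h2⟩
        · exact h1
        · linarith [hx.1]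
    have := hmono (Set.left_mem_Icc.mpr (le_of_lt hpos))
      (Set.right_mem_Icc.mpr (le_of_lt hpos)) hpos
    rw [hQzero] at this
    exact this
end
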